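/- arXiv:1005.3790 — 4 statements merged into one kernel-verified Lean document; each statement's English description precedes it below -/
import Mathlib

section
/- Let c > 0, t ≥ 1 an integer, and z > 1/c. Then the function z ↦ c^t · (Γ(t + 1/2)/Γ(t + 1)) · [ √(c·z − 1) · ∑_{l=0}^{t−1} (Γ(l+1)/Γ(3/2 + l)) · (c·z)^{−(l+1)} + (2/√π) · arctan √(c·z − 1) ] is an antiderivative of z ↦ 1/(z^{t+1} √(c·z − 1)) on (1/c, ∞). -/
open Real Finset

theorem stmt_4 (c : ℝ) (hc : 0 < c) (t : ℕ) (ht : 1 ≤ t) :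
    ∀ z ∈ Set.Ioi (1 / c),
      HasDerivAt
        (fun w : ℝ =>
          c ^ t * (Real.Gamma ((t : ℝ) + 1 / 2) / Real.Gamma ((t : ℝ) + 1)) *
            (Real.sqrt (c * w - 1) *
                (∑ l ∈ Finset.range t,
                  Real.Gamma ((l : ℝ) + 1) / Real.Gamma (3 / 2 + l) / (c * w) ^ (l + 1)) +
              2 / Real.sqrt Real.pi * Real.arctan (Real.sqrt (c * w - 1))))
        (1 / (z ^ (t + 1) * Real.sqrt (c * z - 1))) z := by
  intro z hz
  rw [Set.mem_Ioi, div_lt_iff₀ hc] at hz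
  have hcz1 : 1 < c * z := by nlinarith
  have hu : 0 < c * z - 1 := by linarith
  have hcz : 0 < c * z := by linarith
  have hz0 : 0 < z := by nlinarith
  set su := Real.sqrt (c * z - 1) with hsu_def
  have hsu : 0 < su := Real.sqrt_pos.mpr hu
  have hsu2 : su ^ 2 = c * z - 1 := Real.sq_sqrt hu.le
  have hcz2 : c * z = su ^ 2 + 1 := by linarith
  have hΓpos : ∀ x : ℝ, 0 < x → Real.Gamma x ≠ 0 := fun x hx => (Real.Gamma_pos_of_pos hx).ne'
  -- basic derivatives
  have hlin : HasDerivAt (fun w : ℝ => c * w - 1) c z := by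
    simpa using ((hasDerivAt_id z).const_mul c).sub_const 1
  have hsq : HasDerivAt (fun w : ℝ => Real.sqrt (c * w - 1)) (c / (2 * su)) z :=
    hlin.sqrt hu.ne'
  have hterm : ∀ l : ℕ, HasDerivAt
      (fun w : ℝ => Real.Gamma ((l : ℝ) + 1) / Real.Gamma (3 / 2 + l) / (c * w) ^ (l + 1))
      (-(Real.Gamma ((l : ℝ) + 1) / Real.Gamma (3 / 2 + l) * ((l : ℝ) + 1) * c
          / (c * z) ^ (l + 2))) z := by
    intro l
    have hp : HasDerivAt (fun w : ℝ => (c * w) ^ (l + 1))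
        (((l : ℝ) + 1) * (c * z) ^ l * c) z := by
      have := ((hasDerivAt_id z).const_mul c).fun_pow (l + 1)
      simpa using this
    have h := (hasDerivAt_const z
        (Real.Gamma ((l : ℝ) + 1) / Real.Gamma (3 / 2 + l))).fun_div hp
        (pow_ne_zero _ hcz.ne')
    refine h.congr_deriv (Eq.symm ?_)
    field_simp
    ring
  have hsum : HasDerivAt
      (fun w : ℝ => ∑ l ∈ Finset.range t,
        Real.Gamma ((l : ℝ) + 1) / Real.Gamma (3 / 2 + l) / (c * w) ^ (l + 1))
      (∑ l ∈ Finset.range t,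
        -(Real.Gamma ((l : ℝ) + 1) / Real.Gamma (3 / 2 + l) * ((l : ℝ) + 1) * c
          / (c * z) ^ (l + 2))) z :=
    HasDerivAt.fun_sum fun l _ => hterm l
  have harc : HasDerivAt (fun w : ℝ => 2 / Real.sqrt Real.pi *
      Real.arctan (Real.sqrt (c * w - 1)))
      (2 / Real.sqrt Real.pi * (1 / (1 + su ^ 2) * (c / (2 * su)))) z :=
    (hsq.arctan).const_mul _
  have htot := ((hsq.fun_mul hsum).fun_add harc).const_mul
      (c ^ t * (Real.Gamma ((t : ℝ) + 1 / 2) / Real.Gamma ((t : ℝ) + 1)))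
  refine htot.congr_deriv (Eq.symm ?_)
  simp only [← hsu_def]
  -- derivative value equality
  set g : ℕ → ℝ := fun l => c / su *
    (Real.Gamma ((l : ℝ) + 1) / Real.Gamma ((l : ℝ) + 1 / 2) / (c * z) ^ (l + 1)) with hg
  have key : ∀ l : ℕ,
      c / (2 * su) * (Real.Gamma ((l : ℝ) + 1) / Real.Gamma (3 / 2 + l) / (c * z) ^ (l + 1))
        + su * (-(Real.Gamma ((l : ℝ) + 1) / Real.Gamma (3 / 2 + l) * ((l : ℝ) + 1) * c
          / (c * z) ^ (l + 2)))
      = g (l + 1) - g l := by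
    intro l
    have h1 : Real.Gamma ((l : ℝ) + 1 + 1) = ((l : ℝ) + 1) * Real.Gamma ((l : ℝ) + 1) := by
      rw [Real.Gamma_add_one (by positivity)]
    have h2 : Real.Gamma ((l : ℝ) + 1 + 1 / 2)
        = ((l : ℝ) + 1 / 2) * Real.Gamma ((l : ℝ) + 1 / 2) := by
      rw [show ((l : ℝ) + 1 + 1 / 2) = ((l : ℝ) + 1 / 2) + 1 by ring,
        Real.Gamma_add_one (by positivity)]
    have h3 : Real.Gamma (3 / 2 + l : ℝ) = ((l : ℝ) + 1 / 2) * Real.Gamma ((l : ℝ) + 1 / 2) := by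
      rw [show (3 / 2 + l : ℝ) = ((l : ℝ) + 1 / 2) + 1 by ring,
        Real.Gamma_add_one (by positivity)]
    simp only [hg]
    push_cast
    rw [h1, h2, h3, hcz2]
    have hG1 := hΓpos ((l : ℝ) + 1) (by positivity)
    have hG2 := hΓpos ((l : ℝ) + 1 / 2) (by positivity)
    have hl2 : ((l : ℝ) + 1 / 2) ≠ 0 := by positivity
    have hs1 : (su : ℝ) ^ 2 + 1 ≠ 0 := by positivity
    field_simp
    ring
  have hsum_eq : c / (2 * su) * (∑ l ∈ Finset.range t,
        Real.Gamma ((l : ℝ) + 1) / Real.Gamma (3 / 2 + l) / (c * z) ^ (l + 1))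
      + su * (∑ l ∈ Finset.range t,
        -(Real.Gamma ((l : ℝ) + 1) / Real.Gamma (3 / 2 + l) * ((l : ℝ) + 1) * c
          / (c * z) ^ (l + 2)))
      = g t - g 0 := by
    rw [Finset.mul_sum, Finset.mul_sum, ← Finset.sum_add_distrib]
    rw [Finset.sum_congr rfl fun l _ => key l]
    exact Finset.sum_range_sub g t
  have harc_eq : 2 / Real.sqrt Real.pi * (1 / (1 + su ^ 2) * (c / (2 * su))) = g 0 := by
    simp only [hg]
    norm_num [Real.Gamma_one, Real.Gamma_one_half_eq]
    rw [hcz2]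
    have hπ : Real.sqrt Real.pi ≠ 0 := by positivity
    have hs1 : (su : ℝ) ^ 2 + 1 ≠ 0 := by positivity
    field_simp
    ring
  rw [hsum_eq, harc_eq]
  -- final: 1/(z^(t+1) * su) = C * g t
  simp only [hg]
  have hG1 := hΓpos ((t : ℝ) + 1) (by positivity)
  have hG2 := hΓpos ((t : ℝ) + 1 / 2) (by positivity)
  rw [mul_pow]
  field_simp
  ring
end

section
/- Let a > b > 0. For τ ∈ (−b, b), the function τ ↦ (1/(a√(a² − b²))) · arctan( (τ/a)·√((a² − b²)/(b² − τ²)) ) is an antiderivative of τ ↦ 1/((a² − τ²)·√(b² − τ²)). -/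
theorem stmt_7 (a b : ℝ) (hab : b < a) (hb : 0 < b) :
    ∀ τ ∈ Set.Ioo (-b) b,
      HasDerivAt
        (fun t : ℝ =>
          1 / (a * Real.sqrt (a ^ 2 - b ^ 2)) *
            Real.arctan (t / a * Real.sqrt ((a ^ 2 - b ^ 2) / (b ^ 2 - t ^ 2))))
        (1 / ((a ^ 2 - τ ^ 2) * Real.sqrt (b ^ 2 - τ ^ 2))) τ := by
  intro τ hτ
  obtain ⟨h1, h2⟩ := hτ
  have ha : 0 < a := lt_trans hb hab
  have hb2 : 0 < b ^ 2 - τ ^ 2 := by nlinarith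
  have hc2 : 0 < a ^ 2 - b ^ 2 := by nlinarith
  have ha2 : 0 < a ^ 2 - τ ^ 2 := by nlinarith
  set s := Real.sqrt (b ^ 2 - τ ^ 2) with hs_def
  set c := Real.sqrt (a ^ 2 - b ^ 2) with hc_def
  have hs : 0 < s := Real.sqrt_pos.mpr hb2
  have hc : 0 < c := Real.sqrt_pos.mpr hc2
  have hs2 : s ^ 2 = b ^ 2 - τ ^ 2 := Real.sq_sqrt hb2.le
  have hcc : c ^ 2 = a ^ 2 - b ^ 2 := Real.sq_sqrt hc2.le
  -- derivative of sqrt(b^2 - t^2)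
  have hin : HasDerivAt (fun t : ℝ => b ^ 2 - t ^ 2) (-(2 * τ)) τ := by
    simpa using (hasDerivAt_pow 2 τ).const_sub (b ^ 2)
  have hsd : HasDerivAt (fun t : ℝ => Real.sqrt (b ^ 2 - t ^ 2)) (-τ / s) τ := by
    have := (Real.hasDerivAt_sqrt hb2.ne').comp τ hin
    refine this.congr_deriv ?_
    rw [← hs_def]
    field_simp
  have hdiv : HasDerivAt (fun t : ℝ => t / Real.sqrt (b ^ 2 - t ^ 2))
      ((1 * s - τ * (-τ / s)) / s ^ 2) τ :=
    (hasDerivAt_id τ).div hsd hs.ne'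
  have hmul : HasDerivAt (fun t : ℝ => c / a * (t / Real.sqrt (b ^ 2 - t ^ 2)))
      (c / a * ((1 * s - τ * (-τ / s)) / s ^ 2)) τ := hdiv.const_mul _
  set u : ℝ := c / a * (τ / s) with hu_def
  have harc : HasDerivAt (fun t : ℝ =>
      1 / (a * c) * Real.arctan (c / a * (t / Real.sqrt (b ^ 2 - t ^ 2))))
      (1 / (a * c) * (1 / (1 + u ^ 2) * (c / a * ((1 * s - τ * (-τ / s)) / s ^ 2)))) τ := by
    exact (((Real.hasDerivAt_arctan u).comp τ hmul).const_mul _)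
  -- the given function agrees with this one near τ
  have hev : (fun t : ℝ =>
      1 / (a * Real.sqrt (a ^ 2 - b ^ 2)) *
        Real.arctan (t / a * Real.sqrt ((a ^ 2 - b ^ 2) / (b ^ 2 - t ^ 2)))) =ᶠ[nhds τ]
      (fun t : ℝ => 1 / (a * c) * Real.arctan (c / a * (t / Real.sqrt (b ^ 2 - t ^ 2)))) := by
    have hmem : Set.Ioo (-b) b ∈ nhds τ := isOpen_Ioo.mem_nhds ⟨h1, h2⟩
    filter_upwards [hmem] with t ht
    have hbt : 0 < b ^ 2 - t ^ 2 := by nlinarith [ht.1, ht.2]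
    rw [Real.sqrt_div hc2.le]
    rw [hc_def]
    ring_nf
  have hval : 1 / ((a ^ 2 - τ ^ 2) * s) =
      1 / (a * c) * (1 / (1 + u ^ 2) * (c / a * ((1 * s - τ * (-τ / s)) / s ^ 2))) := by
    have hu2 : 1 + u ^ 2 = b ^ 2 * (a ^ 2 - τ ^ 2) / (a ^ 2 * s ^ 2) := by
      rw [hu_def]; field_simp; linear_combination a^2*hs2 + τ^2*hcc
    rw [hu2]
    field_simp
    linear_combination (-1)*hs2
  rw [hval]
  exact harc.congr_of_eventuallyEq hev
end

section
/- Let 0 < b < 1. For τ ∈ (−b, b), the function τ ↦ (1/√(1 − b²)) · arctan( τ·√((1 − b²)/(b² − τ²)) ) is an antiderivative of τ ↦ 1/((1 − τ²)·√(b² − τ²)). -/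
theorem stmt_8 (b : ℝ) (hb0 : 0 < b) (hb1 : b < 1) :
    ∀ τ ∈ Set.Ioo (-b) b,
      HasDerivAt
        (fun t : ℝ =>
          1 / Real.sqrt (1 - b ^ 2) *
            Real.arctan (t * Real.sqrt ((1 - b ^ 2) / (b ^ 2 - t ^ 2))))
        (1 / ((1 - τ ^ 2) * Real.sqrt (b ^ 2 - τ ^ 2))) τ := by
  intro τ hτ
  obtain ⟨h1, h2⟩ := hτ
  have hc2 : (0:ℝ) < 1 - b ^ 2 := by nlinarith
  have hbt : (0:ℝ) < b ^ 2 - τ ^ 2 := by nlinarith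
  have ht1 : (0:ℝ) < 1 - τ ^ 2 := by nlinarith
  set c := Real.sqrt (1 - b ^ 2) with hc
  set s := Real.sqrt (b ^ 2 - τ ^ 2) with hs
  have hcpos : 0 < c := Real.sqrt_pos.2 hc2
  have hspos : 0 < s := Real.sqrt_pos.2 hbt
  have hc2' : c ^ 2 = 1 - b ^ 2 := Real.sq_sqrt hc2.le
  have hs2' : s ^ 2 = b ^ 2 - τ ^ 2 := Real.sq_sqrt hbt.le
  have hd1 : HasDerivAt (fun t : ℝ => b ^ 2 - t ^ 2) (-(2 * τ)) τ := by
    have := (hasDerivAt_pow 2 τ).const_sub (b ^ 2)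
    simpa using this
  have hd2 : HasDerivAt (fun t : ℝ => Real.sqrt (b ^ 2 - t ^ 2))
      (-(2 * τ) / (2 * s)) τ := hd1.sqrt hbt.ne'
  have hd3 : HasDerivAt (fun t : ℝ => c * t) c τ := by
    simpa using (hasDerivAt_id τ).const_mul c
  have hd4 : HasDerivAt (fun t : ℝ => c * t / Real.sqrt (b ^ 2 - t ^ 2))
      ((c * s - c * τ * (-(2 * τ) / (2 * s))) / s ^ 2) τ := hd3.div hd2 hspos.ne'
  have hd5 := hd4.arctan
  have hd6 := hd5.const_mul (1 / c)
  have heq : (fun t : ℝ => 1 / c *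
      Real.arctan (t * Real.sqrt ((1 - b ^ 2) / (b ^ 2 - t ^ 2)))) =ᶠ[nhds τ]
      (fun t : ℝ => 1 / c * Real.arctan (c * t / Real.sqrt (b ^ 2 - t ^ 2))) := by
    have hmem : Set.Ioo (-b) b ∈ nhds τ := (isOpen_Ioo).mem_nhds ⟨h1, h2⟩
    filter_upwards [hmem] with t ht
    have hbt' : (0:ℝ) < b ^ 2 - t ^ 2 := by
      obtain ⟨ht1, ht2⟩ := ht; nlinarith
    rw [Real.sqrt_div hc2.le, ← hc]
    ring_nf
  have hval : 1 / c * (1 / (1 + (c * τ / s) ^ 2) *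
      ((c * s - c * τ * (-(2 * τ) / (2 * s))) / s ^ 2)) = 1 / ((1 - τ ^ 2) * s) := by
    have key : 1 + (c * τ / s) ^ 2 = b ^ 2 * (1 - τ ^ 2) / s ^ 2 := by
      field_simp
      nlinarith [hc2', hs2']
    rw [key]
    field_simp
    linear_combination hs2'
  rw [← hs] at hd6
  rw [← hval]
  exact hd6.congr_of_eventuallyEq heq
end

section
/- Let a > 1 > b > 0, β ∈ ℕ, k ≥ 1, and consider J_{β,k}(x) = ∫₀^x (1−t)^{k−1}(a²−t)^β/(√t (b²−t)^{k+1/2}) dt for x ∈ (0, b²). Then [1 + 2β + (2(k−1)b² + 2k + 1)/(b² − 1)]·J_{β,k}(x) = 2√x·(1−x)^{k−1}(a²−x)^β/(b²−x)^{k+1/2} + 2((k−1)/(b²−1))·J_{β,k−1}(x) + 2a²β·J_{β−1,k}(x) + (2k+1)·(b²/(b²−1))·J_{β,k+1}(x). -/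
open Real MeasureTheory Set intervalIntegral

lemma invsqrt_int (x : ℝ) (hx0 : 0 < x) :
    IntervalIntegrable (fun t => (Real.sqrt t)⁻¹) volume 0 x := by
  have h1 : IntervalIntegrable (fun t : ℝ => t ^ (-(1/2) : ℝ)) volume 0 x :=
    intervalIntegral.intervalIntegrable_rpow' (by norm_num)
  rw [intervalIntegrable_iff_integrableOn_Ioc_of_le hx0.le] at h1 ⊢
  refine h1.congr_fun (fun t ht => ?_) measurableSet_Ioc
  dsimp only
  rw [Real.rpow_neg ht.1.le, ← Real.sqrt_eq_rpow]

lemma aux_int (a b x : ℝ) (hb : x < b^2) (hx0 : 0 < x) (m : ℕ) (B C : ℝ)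
    (hax : ∀ t ∈ Icc (0:ℝ) x, 0 < a^2 - t) :
    IntervalIntegrable (fun t => (1 - t)^m * (a^2 - t)^B / (Real.sqrt t * (b^2 - t)^C))
      volume 0 x := by
  have heq : (fun t => (1 - t)^m * (a^2 - t)^B / (Real.sqrt t * (b^2 - t)^C))
      = fun t => ((1 - t)^m * (a^2 - t)^B / (b^2 - t)^C) * (Real.sqrt t)⁻¹ := by
    funext t
    rw [mul_comm (Real.sqrt t), ← div_div, div_eq_mul_inv]
  rw [heq]
  refine (invsqrt_int x hx0).continuousOn_mul ?_
  rw [uIcc_of_le hx0.le]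
  have hw : ∀ t ∈ Icc (0:ℝ) x, 0 < b^2 - t := fun t ht => by
    have := ht.2; nlinarith
  refine ContinuousOn.div ?_ ?_ (fun t ht => (Real.rpow_pos_of_pos (hw t ht) C).ne')
  · exact (((continuous_const.sub continuous_id).pow m).continuousOn).mul
      (ContinuousOn.rpow_const (continuous_const.sub continuous_id).continuousOn
        (fun t ht => Or.inl (hax t ht).ne'))
  · exact ContinuousOn.rpow_const (continuous_const.sub continuous_id).continuousOn
      (fun t ht => Or.inl (hw t ht).ne')


lemma deriv_lem (a b : ℝ) (ha : 1 < a) (hb0 : 0 < b) (hb1 : b < 1) (β n : ℕ) (t : ℝ)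
    (ht0 : 0 < t) (htb : t < b^2) :
    HasDerivAt (fun y => 2 * Real.sqrt y * ((1 - y) ^ n * (a ^ 2 - y) ^ (β:ℝ)) /
        (b ^ 2 - y) ^ ((n:ℝ) + 1 + 1 / 2))
      ((1 + 2 * (β:ℝ) + (2 * (n:ℝ) * b ^ 2 + 2 * ((n:ℝ) + 1) + 1) / (b ^ 2 - 1)) *
          ((1 - t) ^ n * (a ^ 2 - t) ^ (β:ℝ) / (Real.sqrt t * (b ^ 2 - t) ^ ((n:ℝ) + 1 + 1 / 2)))
        - 2 * ((n:ℝ) / (b ^ 2 - 1)) *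
          ((1 - t) ^ (n - 1) * (a ^ 2 - t) ^ (β:ℝ) / (Real.sqrt t * (b ^ 2 - t) ^ ((n:ℝ) + 1 / 2)))
        - 2 * a ^ 2 * (β:ℝ) *
          ((1 - t) ^ n * (a ^ 2 - t) ^ ((β:ℝ) - 1) / (Real.sqrt t * (b ^ 2 - t) ^ ((n:ℝ) + 1 + 1 / 2)))
        - (2 * ((n:ℝ) + 1) + 1) * (b ^ 2 / (b ^ 2 - 1)) *
          ((1 - t) ^ (n + 1) * (a ^ 2 - t) ^ (β:ℝ) /
            (Real.sqrt t * (b ^ 2 - t) ^ ((n:ℝ) + 1 + 1 + 1 / 2)))) t := by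
  have hb21 : b ^ 2 - 1 ≠ 0 := by nlinarith
  have hu : 0 < 1 - t := by nlinarith
  have hv : 0 < a ^ 2 - t := by nlinarith
  have hw : 0 < b ^ 2 - t := by linarith
  have hs0 : 0 < Real.sqrt t := Real.sqrt_pos.2 ht0
  have hs : HasDerivAt Real.sqrt (1 / (2 * Real.sqrt t)) t := Real.hasDerivAt_sqrt ht0.ne'
  have hU : HasDerivAt (fun y : ℝ => (1 - y) ^ n) ((n:ℝ) * (1 - t) ^ (n - 1) * (-1)) t := by
    simpa using ((hasDerivAt_id t).const_sub (1:ℝ)).fun_pow n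
  have hV : HasDerivAt (fun y : ℝ => (a ^ 2 - y) ^ (β:ℝ))
      ((-1) * (β:ℝ) * (a ^ 2 - t) ^ ((β:ℝ) - 1)) t := by
    simpa using ((hasDerivAt_id t).const_sub (a ^ 2)).rpow_const (p := (β:ℝ)) (Or.inl hv.ne')
  have hW : HasDerivAt (fun y : ℝ => (b ^ 2 - y) ^ ((n:ℝ) + 1 + 1 / 2))
      ((-1) * ((n:ℝ) + 1 + 1 / 2) * (b ^ 2 - t) ^ ((n:ℝ) + 1 + 1 / 2 - 1)) t := by
    simpa using ((hasDerivAt_id t).const_sub (b ^ 2)).rpow_const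
      (p := (n:ℝ) + 1 + 1 / 2) (Or.inl hw.ne')
  have hGd := ((hs.const_mul 2).fun_mul (hU.fun_mul hV)).fun_div hW (Real.rpow_pos_of_pos hw _).ne'
  refine hGd.congr_deriv ?_
  have e0 : (b ^ 2 - t) ^ ((n:ℝ) + 1 + 1 / 2 - 1) = (b ^ 2 - t) ^ ((n:ℝ) + 1 / 2) := by
    rw [show ((n:ℝ) + 1 + 1 / 2 - 1) = (n:ℝ) + 1 / 2 by ring]
  have eC : (b ^ 2 - t) ^ ((n:ℝ) + 1 + 1 / 2) = (b ^ 2 - t) ^ ((n:ℝ) + 1 / 2) * (b ^ 2 - t) := by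
    rw [show ((n:ℝ) + 1 + 1 / 2) = ((n:ℝ) + 1 / 2) + 1 by ring, Real.rpow_add hw, Real.rpow_one]
  have eP : (b ^ 2 - t) ^ ((n:ℝ) + 1 + 1 + 1 / 2)
      = (b ^ 2 - t) ^ ((n:ℝ) + 1 / 2) * (b ^ 2 - t) * (b ^ 2 - t) := by
    rw [show ((n:ℝ) + 1 + 1 + 1 / 2) = (((n:ℝ) + 1 / 2) + 1) + 1 by ring, Real.rpow_add hw,
      Real.rpow_add hw, Real.rpow_one]
  have eB : (a ^ 2 - t) ^ ((β:ℝ) - 1) = (a ^ 2 - t) ^ (β:ℝ) / (a ^ 2 - t) := by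
    rw [Real.rpow_sub hv, Real.rpow_one]
  rw [e0, eC, eP, eB]
  set s : ℝ := Real.sqrt t with hsdef
  have hss : s ^ 2 = t := Real.sq_sqrt ht0.le
  rw [← hss] at hu hv hw ⊢
  have hW0 : (0:ℝ) < (b ^ 2 - s ^ 2) ^ ((n:ℝ) + 1 / 2) := Real.rpow_pos_of_pos hw _
  clear hss hsdef ht0 htb hs hU hV hW hGd
  obtain _ | q := n
  · push_cast
    field_simp
    ring
  · simp only [Nat.add_sub_cancel]
    push_cast
    field_simp
    ring

theorem stmt_18 (a b : ℝ) (ha : 1 < a) (hb0 : 0 < b) (hb1 : b < 1) (β k : ℕ) (hk : 1 ≤ k)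
    (x : ℝ) (hx : x ∈ Set.Ioo 0 (b ^ 2)) :
    (1 + 2 * (β : ℝ) + (2 * ((k : ℝ) - 1) * b ^ 2 + 2 * k + 1) / (b ^ 2 - 1)) *
        (∫ t in (0:ℝ)..x,
          (1 - t) ^ (k - 1) * (a ^ 2 - t) ^ (β : ℝ) /
            (Real.sqrt t * (b ^ 2 - t) ^ ((k : ℝ) + 1 / 2))) =
      2 * Real.sqrt x * (1 - x) ^ (k - 1) * (a ^ 2 - x) ^ (β : ℝ) /
          (b ^ 2 - x) ^ ((k : ℝ) + 1 / 2) +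
        2 * (((k : ℝ) - 1) / (b ^ 2 - 1)) *
          (∫ t in (0:ℝ)..x,
            (1 - t) ^ (k - 1 - 1) * (a ^ 2 - t) ^ (β : ℝ) /
              (Real.sqrt t * (b ^ 2 - t) ^ (((k : ℝ) - 1) + 1 / 2))) +
        2 * a ^ 2 * (β : ℝ) *
          (∫ t in (0:ℝ)..x,
            (1 - t) ^ (k - 1) * (a ^ 2 - t) ^ ((β : ℝ) - 1) /
              (Real.sqrt t * (b ^ 2 - t) ^ ((k : ℝ) + 1 / 2))) +
        (2 * (k : ℝ) + 1) * (b ^ 2 / (b ^ 2 - 1)) *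
          (∫ t in (0:ℝ)..x,
            (1 - t) ^ k * (a ^ 2 - t) ^ (β : ℝ) /
              (Real.sqrt t * (b ^ 2 - t) ^ (((k : ℝ) + 1) + 1 / 2))) := by
  obtain ⟨hx0, hxb⟩ := hx
  obtain ⟨n, rfl⟩ : ∃ n, k = n + 1 := ⟨k - 1, (Nat.succ_pred_eq_of_pos hk).symm⟩
  simp only [Nat.add_sub_cancel]
  push_cast
  simp only [show ((n:ℝ) + 1 - 1 : ℝ) = (n:ℝ) from by ring]
  have hax : ∀ t ∈ Icc (0:ℝ) x, 0 < a^2 - t := fun t ht => by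
    have h1 := ht.2; nlinarith
  have hb2x : ∀ t ∈ Icc (0:ℝ) x, 0 < b^2 - t := fun t ht => by
    have h1 := ht.2; nlinarith
  have hb21 : b^2 - 1 ≠ 0 := by nlinarith
  set c : ℝ := 1 + 2 * (β:ℝ) + (2 * (n:ℝ) * b ^ 2 + 2 * ((n:ℝ) + 1) + 1) / (b ^ 2 - 1) with hc
  set c1 : ℝ := 2 * ((n:ℝ) / (b ^ 2 - 1)) with hc1
  set c2 : ℝ := 2 * a ^ 2 * (β:ℝ) with hc2
  set c3 : ℝ := (2 * ((n:ℝ) + 1) + 1) * (b ^ 2 / (b ^ 2 - 1)) with hc3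
  set φ0 : ℝ → ℝ := fun t =>
    (1 - t) ^ n * (a ^ 2 - t) ^ (β:ℝ) / (Real.sqrt t * (b ^ 2 - t) ^ ((n:ℝ) + 1 + 1 / 2)) with hφ0
  set φ1 : ℝ → ℝ := fun t =>
    (1 - t) ^ (n - 1) * (a ^ 2 - t) ^ (β:ℝ) / (Real.sqrt t * (b ^ 2 - t) ^ ((n:ℝ) + 1 / 2)) with hφ1
  set φ2 : ℝ → ℝ := fun t =>
    (1 - t) ^ n * (a ^ 2 - t) ^ ((β:ℝ) - 1) / (Real.sqrt t * (b ^ 2 - t) ^ ((n:ℝ) + 1 + 1 / 2)) with hφ2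
  set φ3 : ℝ → ℝ := fun t =>
    (1 - t) ^ (n + 1) * (a ^ 2 - t) ^ (β:ℝ) / (Real.sqrt t * (b ^ 2 - t) ^ ((n:ℝ) + 1 + 1 + 1 / 2)) with hφ3
  have hI0 : IntervalIntegrable φ0 volume 0 x := aux_int a b x hxb hx0 n _ _ hax
  have hI1 : IntervalIntegrable φ1 volume 0 x := aux_int a b x hxb hx0 (n-1) _ _ hax
  have hI2 : IntervalIntegrable φ2 volume 0 x := aux_int a b x hxb hx0 n _ _ hax
  have hI3 : IntervalIntegrable φ3 volume 0 x := aux_int a b x hxb hx0 (n+1) _ _ hax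
  set G : ℝ → ℝ := fun t =>
    2 * Real.sqrt t * ((1 - t) ^ n * (a ^ 2 - t) ^ (β:ℝ)) / (b ^ 2 - t) ^ ((n:ℝ) + 1 + 1 / 2) with hG
  have hGcont : ContinuousOn G (Icc 0 x) := by
    refine ContinuousOn.div ?_ ?_ (fun t ht => (Real.rpow_pos_of_pos (hb2x t ht) _).ne')
    · exact ((continuous_const.mul Real.continuous_sqrt).continuousOn).mul
        ((((continuous_const.sub continuous_id).pow n).continuousOn).mul
          (ContinuousOn.rpow_const (continuous_const.sub continuous_id).continuousOn
            (fun t ht => Or.inl (hax t ht).ne')))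
    · exact ContinuousOn.rpow_const (continuous_const.sub continuous_id).continuousOn
        (fun t ht => Or.inl (hb2x t ht).ne')
  have hderiv : ∀ t ∈ Ioo 0 x, HasDerivAt G (c * φ0 t - c1 * φ1 t - c2 * φ2 t - c3 * φ3 t) t :=
    fun t ht => deriv_lem a b ha hb0 hb1 β n t ht.1 (lt_trans ht.2 hxb)
  have hI0c := hI0.const_mul c
  have hI1c := hI1.const_mul c1
  have hI2c := hI2.const_mul c2
  have hI3c := hI3.const_mul c3
  have hgint : IntervalIntegrable (fun t => c * φ0 t - c1 * φ1 t - c2 * φ2 t - c3 * φ3 t)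
      volume 0 x := ((hI0c.sub hI1c).sub hI2c).sub hI3c
  have hkey : (∫ t in (0:ℝ)..x, (c * φ0 t - c1 * φ1 t - c2 * φ2 t - c3 * φ3 t)) = G x - G 0 :=
    integral_eq_sub_of_hasDeriv_right_of_le hx0.le hGcont
      (fun t ht => (hderiv t ht).hasDerivWithinAt) hgint
  have h6 : (∫ t in (0:ℝ)..x, (c * φ0 t - c1 * φ1 t - c2 * φ2 t - c3 * φ3 t))
      = c * (∫ t in (0:ℝ)..x, φ0 t) - c1 * (∫ t in (0:ℝ)..x, φ1 t)
        - c2 * (∫ t in (0:ℝ)..x, φ2 t) - c3 * (∫ t in (0:ℝ)..x, φ3 t) := by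
    rw [integral_sub ((hI0c.sub hI1c).sub hI2c) hI3c, integral_sub (hI0c.sub hI1c) hI2c,
      integral_sub hI0c hI1c, intervalIntegral.integral_const_mul, intervalIntegral.integral_const_mul, intervalIntegral.integral_const_mul,
      intervalIntegral.integral_const_mul]
  have hG0 : G 0 = 0 := by simp [hG]
  have hGx : G x = 2 * Real.sqrt x * (1 - x) ^ n * (a ^ 2 - x) ^ (β:ℝ)
      / (b ^ 2 - x) ^ ((n:ℝ) + 1 + 1 / 2) := by
    simp only [hG]; ring
  linear_combination hkey - h6 + hGx - hG0
end
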